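/- arXiv:1603.05359 — 2 statements merged into one kernel-verified Lean document; each statement's English description precedes it below -/
import Mathlib

section
/- Let σ > 0, d ≥ 1, and x_1,...,x_T ∈ ℝ^d with ‖x_s‖₂ ≤ 1. With M_0 = I_d, M_s = M_{s−1} + σ^{-2} x_s x_sᵀ, and z_s = √(x_sᵀ M_{s−1}^{-1} x_s), we have ∑_{s=1}^T z_s² ≤ d·log(1 + T/(dσ²)) / log(1 + 1/σ²). -/
open Matrix

section EPLAux

lemma epl_star_id {d : ℕ} (y : Fin d → ℝ) : star y = y := by funext i; simp

lemma epl_psd_vecMulVec {d : ℕ} (v : Fin d → ℝ) : (vecMulVec v v).PosSemidef := by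
  have h := posSemidef_self_mul_conjTranspose (replicateCol (Fin 1) v)
  rw [conjTranspose_replicateCol, epl_star_id] at h
  convert h using 1; exact vecMulVec_eq (Fin 1) v v

lemma epl_psd_smul {d : ℕ} {A : Matrix (Fin d) (Fin d) ℝ} (hA : A.PosSemidef) {c : ℝ}
    (hc : 0 ≤ c) : (c • A).PosSemidef := by
  refine PosSemidef.of_dotProduct_mulVec_nonneg ?_ fun y => ?_
  · unfold Matrix.IsHermitian
    rw [conjTranspose_smul, hA.1]
    simp
  · rw [smul_mulVec, dotProduct_smul, smul_eq_mul]
    exact mul_nonneg hc (hA.dotProduct_mulVec_nonneg y)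

lemma epl_bern {c y : ℝ} (hc : 0 < c) (h0 : 0 ≤ y) (h1 : y ≤ 1) :
    y * Real.log (1 + c) ≤ Real.log (1 + c * y) := by
  have h := rpow_one_add_le_one_add_mul_self (by linarith : (-1:ℝ) ≤ c) h0 h1
  calc y * Real.log (1 + c) = Real.log ((1 + c) ^ y) := (Real.log_rpow (by linarith) y).symm
    _ ≤ Real.log (1 + c * y) := by
        rw [mul_comm c y]
        exact Real.log_le_log (Real.rpow_pos_of_pos (by linarith) y) h

lemma epl_dot_self_nonneg {d : ℕ} (v : Fin d → ℝ) : 0 ≤ v ⬝ᵥ v :=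
  Finset.sum_nonneg fun _ _ => mul_self_nonneg _

lemma epl_trace_eq_sum_eigenvalues {d : ℕ} {A : Matrix (Fin d) (Fin d) ℝ}
    (hA : A.IsHermitian) : A.trace = ∑ i, hA.eigenvalues i := by
  nth_rewrite 1 [hA.spectral_theorem]
  rw [Unitary.conjStarAlgAut_apply, trace_mul_cycle, Unitary.coe_star_mul_self, one_mul, trace_diagonal]
  simp

lemma epl_det_le_pow {d : ℕ} (hd : 1 ≤ d) {A : Matrix (Fin d) (Fin d) ℝ}
    (hA : A.PosSemidef) : A.det ≤ (A.trace / d) ^ d := by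
  have hd0 : (0:ℝ) < d := by exact_mod_cast hd
  have hev : ∀ i, 0 ≤ hA.1.eigenvalues i := hA.eigenvalues_nonneg
  have hgm := Real.geom_mean_le_arith_mean_weighted Finset.univ (fun _ => 1 / (d:ℝ))
    hA.1.eigenvalues (fun i _ => by positivity) (by simp [Finset.card_univ]; field_simp)
    (fun i _ => hev i)
  have hdet : A.det = ∏ i, hA.1.eigenvalues i := by
    have := hA.1.det_eq_prod_eigenvalues
    simpa using this
  have htr : A.trace = ∑ i, hA.1.eigenvalues i := epl_trace_eq_sum_eigenvalues hA.1
  have hprod : ∏ i, hA.1.eigenvalues i = (∏ i, hA.1.eigenvalues i ^ (1 / (d:ℝ))) ^ d := by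
    rw [← Finset.prod_pow]
    refine Finset.prod_congr rfl fun i _ => ?_
    rw [← Real.rpow_natCast (hA.1.eigenvalues i ^ (1 / (d:ℝ))) d, ← Real.rpow_mul (hev i)]
    rw [one_div, inv_mul_cancel₀ hd0.ne', Real.rpow_one]
  rw [hdet, hprod, htr]
  have hnn : 0 ≤ ∏ i, hA.1.eigenvalues i ^ (1 / (d:ℝ)) :=
    Finset.prod_nonneg fun i _ => Real.rpow_nonneg (hev i) _
  refine pow_le_pow_left₀ hnn ?_ d
  calc (∏ i, hA.1.eigenvalues i ^ (1 / (d:ℝ))) ≤ ∑ i, (1 / (d:ℝ)) * hA.1.eigenvalues i := hgm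
    _ = (∑ i, hA.1.eigenvalues i) / d := by rw [← Finset.mul_sum]; ring

lemma epl_quad_le {d : ℕ} {A : Matrix (Fin d) (Fin d) ℝ} (hPD : A.PosDef)
    (hS : (A - 1).PosSemidef) (x : Fin d → ℝ) : x ⬝ᵥ A⁻¹ *ᵥ x ≤ x ⬝ᵥ x := by
  have hunit : IsUnit A.det := isUnit_iff_ne_zero.mpr hPD.det_pos.ne'
  set y : Fin d → ℝ := A⁻¹ *ᵥ x with hy
  have hAy : A *ᵥ y = x := by
    rw [hy, mulVec_mulVec, Matrix.mul_nonsing_inv _ hunit, one_mulVec]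
  have hsymm : Aᵀ = A := by
    have h := hPD.isHermitian
    simpa [Matrix.IsHermitian, conjTranspose_eq_transpose_of_trivial] using h
  have hAy' : A *ᵥ y = y ᵥ* A := by rw [← hsymm, mulVec_transpose, hsymm]
  have h2 : x ⬝ᵥ A⁻¹ *ᵥ x = y ⬝ᵥ (A *ᵥ y) := by
    rw [← hy, ← hAy]
    nth_rewrite 1 [hAy']
    rw [← dotProduct_mulVec]
  have h1 : x ⬝ᵥ x = y ⬝ᵥ ((A * A) *ᵥ y) := by
    rw [← hAy]
    nth_rewrite 1 [hAy']
    rw [← dotProduct_mulVec, mulVec_mulVec]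
  have hpsd : (A * A - A).PosSemidef := by
    have e : A * A - A = (A - 1) ^ 2 + (A - 1) := by noncomm_ring
    rw [e]; exact (hS.pow 2).add hS
  have h3 := hpsd.dotProduct_mulVec_nonneg y
  rw [epl_star_id y] at h3
  rw [h2, h1]
  have e : (A * A - A) *ᵥ y = (A * A) *ᵥ y - A *ᵥ y := by rw [sub_mulVec]
  rw [e, dotProduct_sub] at h3
  linarith

lemma epl_det_rec {d : ℕ} {A : Matrix (Fin d) (Fin d) ℝ} (hunit : IsUnit A.det)
    (c : ℝ) (v : Fin d → ℝ) :
    (A + c • vecMulVec v v).det = A.det * (1 + c * (v ⬝ᵥ A⁻¹ *ᵥ v)) := by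
  have e : c • vecMulVec v v = replicateCol (Fin 1) (c • v) * replicateRow (Fin 1) v := by
    rw [show replicateCol (Fin 1) (c • v) * replicateRow (Fin 1) v = vecMulVec (c • v) v by
      convert (vecMulVec_eq (Fin 1) (c • v) v).symm]
    ext i j
    simp [vecMulVec_apply]
    ring
  rw [e, det_add_mul _ _ hunit]
  congr 1
  have hone : ∀ (inst : DecidableEq (Fin 1)) (B : Matrix (Fin 1) (Fin 1) ℝ),
      @Matrix.det (Fin 1) inst _ ℝ _ B = B 0 0 := by
    intro inst B
    rw [Subsingleton.elim inst (instDecidableEqFin 1)]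
    exact det_fin_one B
  rw [hone]
  simp only [Matrix.add_apply, Matrix.one_apply_eq]
  rw [← replicateRow_vecMul, replicateRow_mul_replicateCol_apply, ← dotProduct_mulVec, mulVec_smul, dotProduct_smul,
    smul_eq_mul]

end EPLAux

theorem sum_sq_confidence_widths_bound (d T : ℕ) (hd : 1 ≤ d) (σ : ℝ) (hσ : 0 < σ)
    (x : ℕ → Fin d → ℝ) (hx : ∀ s ∈ Finset.Icc 1 T, Real.sqrt (x s ⬝ᵥ x s) ≤ 1)
    (M : ℕ → Matrix (Fin d) (Fin d) ℝ) (hM0 : M 0 = 1)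
    (hMrec : ∀ s, M (s + 1) = M s + (σ ^ 2)⁻¹ • vecMulVec (x (s + 1)) (x (s + 1)))
    (z : ℕ → ℝ) (hz : ∀ s, z s = Real.sqrt (x s ⬝ᵥ (M (s - 1))⁻¹ *ᵥ x s)) :
    ∑ s ∈ Finset.Icc 1 T, (z s) ^ 2 ≤
      d * Real.log (1 + T / (d * σ ^ 2)) / Real.log (1 + 1 / σ ^ 2) := by
  have hσ2 : (0:ℝ) < σ ^ 2 := by positivity
  set c : ℝ := (σ ^ 2)⁻¹ with hc
  have hc0 : 0 < c := by positivity
  have hd0 : (0:ℝ) < d := by exact_mod_cast hd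
  -- M n - 1 is PSD
  have hS : ∀ n, (M n - 1).PosSemidef := by
    intro n
    induction n with
    | zero => rw [hM0, sub_self]; exact .zero
    | succ n ih =>
      have e : M (n+1) - 1 = (M n - 1) + c • vecMulVec (x (n+1)) (x (n+1)) := by
        rw [hMrec n]; abel
      rw [e]
      exact ih.add (epl_psd_smul (epl_psd_vecMulVec _) hc0.le)
  have hPD : ∀ n, (M n).PosDef := by
    intro n
    have e : M n = (M n - 1) + 1 := by abel
    rw [e]
    exact Matrix.PosDef.posSemidef_add (hS n) Matrix.PosDef.one
  have hdet_pos : ∀ n, 0 < (M n).det := fun n => (hPD n).det_pos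
  have hunit : ∀ n, IsUnit (M n).det := fun n => isUnit_iff_ne_zero.mpr (hdet_pos n).ne'
  set q : ℕ → ℝ := fun s => x s ⬝ᵥ (M (s - 1))⁻¹ *ᵥ x s with hqdef
  have hq0 : ∀ s, 0 ≤ q s := by
    intro s
    have h := ((hPD (s-1)).posSemidef.inv).dotProduct_mulVec_nonneg (x s)
    rwa [epl_star_id] at h
  have hzsq : ∀ s, z s ^ 2 = q s := by
    intro s; rw [hz s, Real.sq_sqrt (hq0 s)]
  have hxx : ∀ s ∈ Finset.Icc 1 T, x s ⬝ᵥ x s ≤ 1 := by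
    intro s hs
    have h := hx s hs
    have := Real.sq_sqrt (epl_dot_self_nonneg (x s))
    nlinarith [Real.sqrt_nonneg (x s ⬝ᵥ x s)]
  have hq1 : ∀ s ∈ Finset.Icc 1 T, q s ≤ 1 := by
    intro s hs
    exact le_trans (epl_quad_le (hPD (s-1)) (hS (s-1)) (x s)) (hxx s hs)
  -- determinant telescoping
  have hlog : ∀ n, Real.log (M n).det = ∑ s ∈ Finset.Icc 1 n, Real.log (1 + c * q s) := by
    intro n
    induction n with
    | zero => simp [hM0]
    | succ n ih =>
      have hrec : (M (n+1)).det = (M n).det * (1 + c * q (n+1)) := by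
        rw [hMrec n, epl_det_rec (hunit n) c (x (n+1))]
        simp [hqdef]
      rw [Finset.sum_Icc_succ_top (Nat.le_add_left 1 n), ← ih, hrec,
        Real.log_mul (hdet_pos n).ne' (by nlinarith [hq0 (n+1)] : (1:ℝ) + c * q (n+1) ≠ 0)]
  -- trace bound
  have htrv : ∀ v : Fin d → ℝ, (vecMulVec v v).trace = v ⬝ᵥ v := by
    intro v
    simp [Matrix.trace, Matrix.diag, vecMulVec_apply, dotProduct]
  have htr : ∀ n ≤ T, (M n).trace ≤ d + c * n := by
    intro n hn
    induction n with
    | zero => simp [hM0, Matrix.trace_one]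
    | succ n ih =>
      have h1 := ih (le_trans (Nat.le_succ n) hn)
      rw [hMrec n, Matrix.trace_add, Matrix.trace_smul, htrv, smul_eq_mul]
      have h2 : x (n+1) ⬝ᵥ x (n+1) ≤ 1 :=
        hxx (n+1) (Finset.mem_Icc.mpr ⟨Nat.le_add_left 1 n, hn⟩)
      push_cast
      nlinarith [epl_dot_self_nonneg (x (n+1))]
  -- bound log det (M T)
  have hR : (1:ℝ) ≤ 1 + T / (d * σ ^ 2) := by
    have : (0:ℝ) ≤ T / (d * σ ^ 2) := by positivity
    linarith
  have hdet_le : (M T).det ≤ (1 + T / (d * σ ^ 2)) ^ d := by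
    have h1 := epl_det_le_pow hd (hPD T).posSemidef
    have htrd : (M T).trace / d ≤ 1 + T / (d * σ ^ 2) := by
      have h2 := htr T le_rfl
      rw [div_le_iff₀ hd0]
      have he : (1 + (T:ℝ) / (d * σ ^ 2)) * d = d + c * T := by
        rw [hc]; field_simp
      linarith
    refine h1.trans ?_
    have htrnn : 0 ≤ (M T).trace / d := by
      have : 0 ≤ (M T).trace := by
        rw [epl_trace_eq_sum_eigenvalues (hPD T).isHermitian]
        exact Finset.sum_nonneg fun i _ => (hPD T).posSemidef.eigenvalues_nonneg i
      positivity
    exact pow_le_pow_left₀ htrnn htrd d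
  have hlogdet_le : Real.log (M T).det ≤ d * Real.log (1 + T / (d * σ ^ 2)) := by
    calc Real.log (M T).det ≤ Real.log ((1 + T / (d * σ ^ 2)) ^ d) :=
          Real.log_le_log (hdet_pos T) hdet_le
      _ = d * Real.log (1 + T / (d * σ ^ 2)) := by rw [Real.log_pow]
  -- Bernoulli per-term
  set L : ℝ := Real.log (1 + 1 / σ ^ 2) with hL
  have hL0 : 0 < L := by
    rw [hL]
    apply Real.log_pos
    have : 0 < 1 / σ ^ 2 := by positivity
    linarith
  have hterm : ∀ s ∈ Finset.Icc 1 T, z s ^ 2 * L ≤ Real.log (1 + c * q s) := by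
    intro s hs
    rw [hzsq s, hL, one_div]
    exact epl_bern (by positivity : (0:ℝ) < (σ ^ 2)⁻¹) (hq0 s) (hq1 s hs)
  have hsum : (∑ s ∈ Finset.Icc 1 T, z s ^ 2) * L ≤ d * Real.log (1 + T / (d * σ ^ 2)) := by
    rw [Finset.sum_mul]
    calc ∑ s ∈ Finset.Icc 1 T, z s ^ 2 * L ≤ ∑ s ∈ Finset.Icc 1 T, Real.log (1 + c * q s) :=
          Finset.sum_le_sum hterm
      _ = Real.log (M T).det := (hlog T).symm
      _ ≤ d * Real.log (1 + T / (d * σ ^ 2)) := hlogdet_le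
  rw [le_div_iff₀ hL0]
  exact hsum
end

section
/- Let σ > 0, d ≥ 1, and x_1,...,x_T ∈ ℝ^d with ‖x_s‖₂ ≤ 1. With M_0 = I_d, M_s = M_{s−1} + σ^{-2} x_s x_sᵀ, and z_s = √(x_sᵀ M_{s−1}^{-1} x_s), we have ∑_{s=1}^T z_s ≤ √(T · d·log(1 + T/(dσ²)) / log(1 + 1/σ²)). -/
open Matrix

lemma trace_eq_sum_eigenvalues' {n : Type*} [Fintype n] [DecidableEq n]
    {A : Matrix n n ℝ} (hA : A.IsHermitian) :
    A.trace = ∑ i, hA.eigenvalues i := by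
  rw [hA.trace_eq_sum_eigenvalues]
  simp

lemma det_le_pow_trace' {d : ℕ} (hd : 0 < d) {A : Matrix (Fin d) (Fin d) ℝ}
    (hA : A.PosSemidef) : A.det ≤ (A.trace / d) ^ d := by
  have hH := hA.1
  have hev : ∀ i, 0 ≤ hH.eigenvalues i := hA.eigenvalues_nonneg
  have hdet : A.det = ∏ i, hH.eigenvalues i := by
    rw [hH.det_eq_prod_eigenvalues]; simp
  have htr : A.trace = ∑ i, hH.eigenvalues i := trace_eq_sum_eigenvalues' hH
  have hd' : (0:ℝ) < d := by exact_mod_cast hd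
  have key : ∏ i, hH.eigenvalues i ^ ((d:ℝ)⁻¹) ≤ ∑ i, (d:ℝ)⁻¹ * hH.eigenvalues i :=
    Real.geom_mean_le_arith_mean_weighted Finset.univ _ _
      (fun i _ => by positivity) (by simp [Finset.card_univ]; field_simp)
      (fun i _ => hev i)
  have hsum : ∑ i, (d:ℝ)⁻¹ * hH.eigenvalues i = A.trace / d := by
    rw [htr, ← Finset.mul_sum]; ring
  have hprod : (∏ i, hH.eigenvalues i ^ ((d:ℝ)⁻¹)) ^ d = ∏ i, hH.eigenvalues i := by
    rw [← Finset.prod_pow]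
    congr 1; ext i
    rw [← Real.rpow_natCast (hH.eigenvalues i ^ ((d:ℝ)⁻¹)) d, ← Real.rpow_mul (hev i)]
    rw [inv_mul_cancel₀ (ne_of_gt hd'), Real.rpow_one]
  calc A.det = (∏ i, hH.eigenvalues i ^ ((d:ℝ)⁻¹)) ^ d := by rw [hprod, hdet]
    _ ≤ (A.trace / d) ^ d := by
        apply pow_le_pow_left₀ (Finset.prod_nonneg fun i _ => Real.rpow_nonneg (hev i) _)
        rw [← hsum]; exact key

lemma mul_log_le_log_one_add' {c u : ℝ} (hc : 0 < c) (h0 : 0 ≤ u) (h1 : u ≤ 1) :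
    u * Real.log (1 + c) ≤ Real.log (1 + c * u) := by
  have hcon := strictConcaveOn_log_Ioi.concaveOn
  have hx : (1 + c) ∈ Set.Ioi (0:ℝ) := by simp; linarith
  have hy : (1:ℝ) ∈ Set.Ioi (0:ℝ) := by simp
  have := hcon.2 hx hy h0 (by linarith : (0:ℝ) ≤ 1 - u) (by ring)
  simp only [smul_eq_mul, Real.log_one, mul_zero, add_zero] at this
  calc u * Real.log (1 + c) ≤ Real.log (u * (1+c) + (1-u) * 1) := this
    _ = Real.log (1 + c * u) := by ring_nf

theorem sum_confidence_widths_bound (d T : ℕ) (hd : 1 ≤ d) (σ : ℝ) (hσ : 0 < σ)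
    (x : ℕ → Fin d → ℝ) (hx : ∀ s ∈ Finset.Icc 1 T, Real.sqrt (x s ⬝ᵥ x s) ≤ 1)
    (M : ℕ → Matrix (Fin d) (Fin d) ℝ) (hM0 : M 0 = 1)
    (hMrec : ∀ s, M (s + 1) = M s + (σ ^ 2)⁻¹ • vecMulVec (x (s + 1)) (x (s + 1)))
    (z : ℕ → ℝ) (hz : ∀ s, z s = Real.sqrt (x s ⬝ᵥ (M (s - 1))⁻¹ *ᵥ x s)) :
    ∑ s ∈ Finset.Icc 1 T, z s ≤
      Real.sqrt (T * (d * Real.log (1 + T / (d * σ ^ 2)) / Real.log (1 + 1 / σ ^ 2))) := by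
  have hc : (0:ℝ) < (σ ^ 2)⁻¹ := by positivity
  set c : ℝ := (σ ^ 2)⁻¹ with hcdef
  set v : ℕ → ℝ := fun s => x s ⬝ᵥ (M (s-1))⁻¹ *ᵥ x s with hvdef
  have hdself : ∀ s, (0:ℝ) ≤ x s ⬝ᵥ x s := by
    intro s
    simp only [dotProduct]
    exact Finset.sum_nonneg fun i _ => mul_self_nonneg _
  -- increments are PSD
  have hPSD : ∀ s : ℕ, (c • vecMulVec (x s) (x s)).PosSemidef := by
    intro s
    have h1 : c • vecMulVec (x s) (x s)
        = vecMulVec (Real.sqrt c • x s) (Real.sqrt c • x s) := by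
      ext i j
      simp only [Matrix.smul_apply, vecMulVec_apply, Pi.smul_apply, smul_eq_mul]
      rw [show Real.sqrt c * x s i * (Real.sqrt c * x s j)
          = (Real.sqrt c * Real.sqrt c) * (x s i * x s j) by ring,
        Real.mul_self_sqrt hc.le]
    rw [h1, vecMulVec_eq (Fin 1)]
    have := posSemidef_self_mul_conjTranspose (replicateCol (Fin 1) (Real.sqrt c • x s))
    rwa [conjTranspose_replicateCol, star_trivial] at this
  -- structure of M
  have hMstruct : ∀ s : ℕ, (M s).PosDef ∧ (M s - 1).PosSemidef := by
    intro s
    induction s with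
    | zero =>
      rw [hM0]
      exact ⟨Matrix.PosDef.one, by simpa using (Matrix.PosSemidef.zero (n := Fin d) (R := ℝ))⟩
    | succ n ih =>
      rw [hMrec n]
      refine ⟨ih.1.add_posSemidef (hPSD (n+1)), ?_⟩
      have he : M n + c • vecMulVec (x (n+1)) (x (n+1)) - 1
           = (M n - 1) + c • vecMulVec (x (n+1)) (x (n+1)) := by abel
      rw [he]
      exact ih.2.add (hPSD (n+1))
  have hv0 : ∀ s, 0 ≤ v s := by
    intro s
    have := ((hMstruct (s-1)).1.inv).posSemidef.dotProduct_mulVec_nonneg (x s)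
    simpa using this
  -- v s ≤ 1 on the range
  have hv1 : ∀ s ∈ Finset.Icc 1 T, v s ≤ 1 := by
    intro s hs
    have hA := (hMstruct (s-1)).1
    have hA1 := (hMstruct (s-1)).2
    set A := M (s-1) with hAdef
    have hAT : Aᵀ = A := by
      have h := hA.1.eq
      rwa [conjTranspose_eq_transpose_of_trivial] at h
    have hInv : A * A⁻¹ = 1 := mul_nonsing_inv A hA.det_pos.ne'.isUnit
    set y := A⁻¹ *ᵥ x s with hydef
    have hxy : A *ᵥ y = x s := by
      rw [hydef, mulVec_mulVec, hInv, one_mulVec]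
    have hsymm : ∀ u w : Fin d → ℝ, u ⬝ᵥ (A *ᵥ w) = (A *ᵥ u) ⬝ᵥ w := by
      intro u w
      rw [dotProduct_mulVec, ← mulVec_transpose, hAT]
    have hvs : v s = y ⬝ᵥ (A *ᵥ y) := by
      show x s ⬝ᵥ y = _
      rw [← hxy, hsymm y y]
    have hxx : x s ⬝ᵥ x s = y ⬝ᵥ ((A * A) *ᵥ y) := by
      conv_lhs => rw [← hxy]
      rw [← mulVec_mulVec, hsymm y (A *ᵥ y)]
    have ePSD : (A * A - A).PosSemidef := by
      have h2 : A * A - A = (A - 1)ᴴ * (A - 1) + (A - 1) := by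
        have : (A - 1)ᴴ = A - 1 := hA1.1
        rw [this]; noncomm_ring
      rw [h2]
      exact (posSemidef_conjTranspose_mul_self (A - 1)).add hA1
    have hq := ePSD.dotProduct_mulVec_nonneg y
    rw [star_trivial] at hq
    have hdiff : x s ⬝ᵥ x s - v s = y ⬝ᵥ ((A * A - A) *ᵥ y) := by
      rw [hxx, hvs, sub_mulVec, dotProduct_sub]
    have hle : v s ≤ x s ⬝ᵥ x s := by linarith [hdiff ▸ hq]
    have h1 : x s ⬝ᵥ x s ≤ 1 := by
      have := hx s hs
      nlinarith [Real.sq_sqrt (hdself s), Real.sqrt_nonneg (x s ⬝ᵥ x s)]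
    linarith
  -- determinant product formula
  have hdet : ∀ n : ℕ, (M n).det = ∏ s ∈ Finset.Icc 1 n, (1 + c * v s) := by
    intro n
    induction n with
    | zero => simp [hM0]
    | succ k ih =>
      have hA := (hMstruct k).1
      have hInv : M k * (M k)⁻¹ = 1 := mul_nonsing_inv _ hA.det_pos.ne'.isUnit
      have hMV : (M k)⁻¹ * vecMulVec (x (k+1)) (x (k+1))
          = vecMulVec ((M k)⁻¹ *ᵥ x (k+1)) (x (k+1)) := by
        ext i j
        simp [Matrix.mul_apply, vecMulVec_apply, mulVec, dotProduct, Finset.sum_mul, mul_assoc]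
      have key : M (k+1) = M k * (1 + c • vecMulVec ((M k)⁻¹ *ᵥ x (k+1)) (x (k+1))) := by
        rw [Matrix.mul_add, Matrix.mul_one, Matrix.mul_smul, ← hMV, ← Matrix.mul_assoc,
          hInv, Matrix.one_mul, ← hMrec k]
      have hsm : c • vecMulVec ((M k)⁻¹ *ᵥ x (k+1)) (x (k+1))
          = vecMulVec (c • ((M k)⁻¹ *ᵥ x (k+1))) (x (k+1)) := by
        ext i j
        simp [vecMulVec_apply]
        ring
      have hdet1 : (1 + c • vecMulVec ((M k)⁻¹ *ᵥ x (k+1)) (x (k+1))).det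
          = 1 + c * v (k+1) := by
        rw [hsm, vecMulVec_eq (Fin 1), det_one_add_replicateCol_mul_replicateRow, dotProduct_smul,
          smul_eq_mul]
        have : v (k+1) = x (k+1) ⬝ᵥ (M k)⁻¹ *ᵥ x (k+1) := by
          simp [hvdef]
        rw [this]
      rw [key, det_mul, hdet1, ih,
        Finset.prod_Icc_succ_top (Nat.le_add_left 1 k)]
  -- trace formula
  have htr : ∀ n : ℕ, (M n).trace = d + c * ∑ s ∈ Finset.Icc 1 n, (x s ⬝ᵥ x s) := by
    intro n
    induction n with
    | zero => simp [hM0, Matrix.trace_one]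
    | succ k ih =>
      have htv : (vecMulVec (x (k+1)) (x (k+1))).trace = x (k+1) ⬝ᵥ x (k+1) := by
        simp [Matrix.trace, Matrix.diag, vecMulVec_apply, dotProduct]
      rw [hMrec k, Matrix.trace_add, Matrix.trace_smul, ih, htv,
        Finset.sum_Icc_succ_top (Nat.le_add_left 1 k), smul_eq_mul]
      ring
  -- positivity facts
  have hL : 0 < Real.log (1 + c) := Real.log_pos (by linarith)
  set L := Real.log (1 + c) with hLdef
  set P := ∑ s ∈ Finset.Icc 1 T, v s with hPdef
  have hP0 : 0 ≤ P := Finset.sum_nonneg fun s _ => hv0 s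
  -- sum bound from potential argument
  have hfacpos : ∀ s ∈ Finset.Icc 1 T, (0:ℝ) < 1 + c * v s := by
    intro s _
    have := hv0 s
    nlinarith
  have htrle : (M T).trace ≤ d + c * T := by
    rw [htr T]
    have hsumle : ∑ s ∈ Finset.Icc 1 T, (x s ⬝ᵥ x s) ≤ T := by
      calc ∑ s ∈ Finset.Icc 1 T, (x s ⬝ᵥ x s) ≤ ∑ s ∈ Finset.Icc 1 T, (1:ℝ) := by
            apply Finset.sum_le_sum
            intro s hs
            have h := hx s hs
            nlinarith [Real.sq_sqrt (hdself s), Real.sqrt_nonneg (x s ⬝ᵥ x s)]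
        _ = T := by simp [Nat.card_Icc]
    nlinarith
  have hd' : (0:ℝ) < d := by exact_mod_cast hd
  have htrpos : (0:ℝ) < (M T).trace / d := by
    rw [htr T]
    have : 0 ≤ ∑ s ∈ Finset.Icc 1 T, (x s ⬝ᵥ x s) :=
      Finset.sum_nonneg fun s _ => hdself s
    positivity
  have hratio : (M T).trace / d ≤ 1 + T / (d * σ ^ 2) := by
    have : (T:ℝ) / (d * σ ^ 2) = c * T / d := by
      rw [hcdef]; field_simp
    rw [this, div_le_iff₀ hd']
    have he : (1 + c * ↑T / ↑d) * ↑d = ↑d + c * ↑T := by field_simp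
    linarith
  have hlogdet : Real.log ((M T).det) ≤ d * Real.log (1 + T / (d * σ ^ 2)) := by
    have h1 : (M T).det ≤ ((M T).trace / d) ^ d :=
      det_le_pow_trace' hd (hMstruct T).1.posSemidef
    have h2 : Real.log ((M T).det) ≤ Real.log (((M T).trace / d) ^ d) :=
      Real.log_le_log (hMstruct T).1.det_pos h1
    rw [Real.log_pow] at h2
    refine h2.trans ?_
    have h3 : Real.log ((M T).trace / d) ≤ Real.log (1 + T / (d * σ ^ 2)) :=
      Real.log_le_log htrpos hratio
    exact mul_le_mul_of_nonneg_left h3 (by positivity)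
  have hPL : P * L ≤ d * Real.log (1 + T / (d * σ ^ 2)) := by
    have h1 : P * L ≤ Real.log ((M T).det) := by
      rw [hdet T, Real.log_prod (fun s hs => (hfacpos s hs).ne'), hPdef,
        Finset.sum_mul]
      apply Finset.sum_le_sum
      intro s hs
      exact mul_log_le_log_one_add' hc (hv0 s) (hv1 s hs)
    exact h1.trans hlogdet
  have hPle : P ≤ d * Real.log (1 + T / (d * σ ^ 2)) / L := by
    rw [le_div_iff₀ hL]
    exact hPL
  -- Cauchy–Schwarz
  have hzsq : ∀ s, z s ^ 2 = v s := by
    intro s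
    rw [hz s]
    exact Real.sq_sqrt (hv0 s)
  have hznn : 0 ≤ ∑ s ∈ Finset.Icc 1 T, z s :=
    Finset.sum_nonneg fun s _ => (hz s) ▸ Real.sqrt_nonneg _
  have hCS : (∑ s ∈ Finset.Icc 1 T, z s) ^ 2 ≤ T * P := by
    calc (∑ s ∈ Finset.Icc 1 T, z s) ^ 2
        ≤ (Finset.Icc 1 T).card * ∑ s ∈ Finset.Icc 1 T, z s ^ 2 :=
          sq_sum_le_card_mul_sum_sq
      _ = T * P := by
          rw [Nat.card_Icc]
          simp only [hzsq]
          norm_num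
          exact Or.inl hPdef.symm
  have hfinal : (∑ s ∈ Finset.Icc 1 T, z s) ^ 2
      ≤ T * (d * Real.log (1 + T / (d * σ ^ 2)) / L) := by
    refine hCS.trans ?_
    exact mul_le_mul_of_nonneg_left hPle (by positivity)
  rw [show (1:ℝ) / σ ^ 2 = c by rw [hcdef]; ring, ← hLdef]
  have hlognn : 0 ≤ Real.log (1 + ↑T / (↑d * σ ^ 2)) := by
    apply Real.log_nonneg
    have : 0 ≤ (T:ℝ) / (↑d * σ ^ 2) := by positivity
    linarith
  rw [Real.le_sqrt hznn]
  · exact hfinal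
  · positivity
end
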